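/- Suppose |PROP| ≥ ℵ₀. Then for every class V_S of pointed Routley–Meyer models with {(M,T) : M an RM-model} ⊆ V_S ⊆ {(M,T) : M a B-model}, there is no set Γ of formulas of the finitary relevant language L_{ωω}→ such that for every (M,T) ∈ V_S: (M,T) satisfies every formula of Γ if and only if (M,T) is inconsistent. That is, inconsistency is not a property of models axiomatizable in L_{ωω}→ with respect to V_S. -/

import Mathlib

universe u

/-- Formulas of the infinitary relevant language with absurdity `L_{∞ω}→` over
propositional variables `P`.  Conjunctions and disjunctions are indexed by
arbitrary (set-sized) index types. -/
inductive RelForm (P : Type u) : Type (u + 1)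
  | atom : P → RelForm P
  | bot : RelForm P
  | neg : RelForm P → RelForm P
  | conj : (ι : Type u) → (ι → RelForm P) → RelForm P
  | disj : (ι : Type u) → (ι → RelForm P) → RelForm P
  | imp : RelForm P → RelForm P → RelForm P

/-- A Routley–Meyer model. -/
structure RMModel (P : Type u) : Type (u + 1) where
  W : Type u
  nonempty : Nonempty W
  R : W → W → W → Prop
  star : W → W
  V : P → W → Prop

/-- Routley–Meyer satisfaction. -/
def RMModel.sat {P : Type u} (M : RMModel P) : M.W → RelForm P → Prop
  | w, .atom p => M.V p w
  | _, .bot => False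
  | w, .neg φ => ¬ M.sat (M.star w) φ
  | w, .conj _ f => ∀ i, M.sat w (f i)
  | w, .disj _ f => ∃ i, M.sat w (f i)
  | w, .imp φ ψ => ∀ a b, M.R w a b → M.sat a φ → M.sat b ψ

/-- The degree of an infinitary relevant formula. -/
noncomputable def RelForm.deg {P : Type u} : RelForm P → Ordinal.{u}
  | .atom _ => 0
  | .bot => 0
  | .neg φ => φ.deg
  | .conj _ f => ⨆ i, (f i).deg
  | .disj _ f => ⨆ i, (f i).deg
  | .imp φ ψ => max φ.deg ψ.deg + 1

/-- A formula lies in the fragment `L_{κω}→` : all its conjunctions and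
disjunctions have index sets of cardinality `< κ`. -/
def RelForm.indexBound {P : Type u} (κ : Cardinal.{u}) : RelForm P → Prop
  | .atom _ => True
  | .bot => True
  | .neg φ => φ.indexBound κ
  | .conj ι f => Cardinal.mk ι < κ ∧ ∀ i, (f i).indexBound κ
  | .disj ι f => Cardinal.mk ι < κ ∧ ∀ i, (f i).indexBound κ
  | .imp φ ψ => φ.indexBound κ ∧ ψ.indexBound κ

/-- The propositional variables occurring in a relevant formula. -/
def RelForm.props {P : Type u} : RelForm P → Set P
  | .atom p => {p}
  | .bot => ∅
  | .neg φ => φ.props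
  | .conj _ f => ⋃ i, (f i).props
  | .disj _ f => ⋃ i, (f i).props
  | .imp φ ψ => φ.props ∪ ψ.props

/-- The B-model frame/valuation conditions, for the pointed model `(M, T)`. -/
def IsBModel {P : Type u} (M : RMModel P) (T : M.W) : Prop :=
  (∀ x, M.R T x x) ∧
  (∀ x v y z, M.R T x v → M.R v y z → M.R x y z) ∧
  (∀ x, M.star (M.star x) = x) ∧
  (∀ x y, M.R T x y → M.R T (M.star y) (M.star x)) ∧
  (∀ p x y, M.V p x → M.R T x y → M.V p y)

/-- The RM-model conditions, for the pointed model `(M, T)`. -/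
def IsRMModel {P : Type u} (M : RMModel P) (T : M.W) : Prop :=
  IsBModel M T ∧
  (∀ z x y, M.R z x y → M.R z (M.star y) (M.star x)) ∧
  (∀ x y z v, (∃ u, M.R x y u ∧ M.R u z v) → (∃ u, M.R x u v ∧ M.R y z u)) ∧
  (∀ x, M.R x x x) ∧
  (∀ x y z, M.R x y z → M.R y x z) ∧
  (∀ x y z, M.R x y z → M.R T x z ∨ M.R T y z)

/-- A pointed model `(M, T)` is inconsistent if `p ∧ ~p` holds at `T`
for some propositional variable `p`. -/
def Inconsistent {P : Type u} (M : RMModel P) (T : M.W) : Prop :=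
  ∃ p : P, M.sat T (.atom p) ∧ M.sat T (.neg (.atom p))

/-- A relevant directed bisimulation between `M₁` and `M₂` for the set `Q` of
propositional variables. -/
structure IsRelDirectedBisim {P : Type u} (Q : Set P) (M₁ M₂ : RMModel P)
    (Z₁ : M₁.W → M₂.W → Prop) (Z₂ : M₂.W → M₁.W → Prop) : Prop where
  nonempty₁ : ∃ x y, Z₁ x y
  nonempty₂ : ∃ x y, Z₂ x y
  star₁ : ∀ x y, Z₁ x y → Z₂ (M₂.star y) (M₁.star x)
  star₂ : ∀ x y, Z₂ x y → Z₁ (M₁.star y) (M₂.star x)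
  back₁ : ∀ x y b c, Z₁ x y → M₂.R y b c →
    ∃ b' c', M₁.R x b' c' ∧ Z₂ b b' ∧ Z₁ c' c
  back₂ : ∀ x y b c, Z₂ x y → M₁.R y b c →
    ∃ b' c', M₂.R x b' c' ∧ Z₁ b b' ∧ Z₂ c' c
  atom₁ : ∀ x y, Z₁ x y → ∀ p ∈ Q, M₁.V p x → M₂.V p y
  atom₂ : ∀ x y, Z₂ x y → ∀ p ∈ Q, M₂.V p x → M₁.V p y

/-- A relevant directed α-bisimulation between `M₁` and `M₂` (for all
propositional variables): a system of pairs of nonempty relations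
`⟨Z₁ β, Z₂ β⟩` for `β ≤ α`, decreasing in `β`. -/
structure IsRelDirectedAlphaBisim {P : Type u} (M₁ M₂ : RMModel P) (α : Ordinal.{u})
    (Z₁ : Ordinal.{u} → M₁.W → M₂.W → Prop)
    (Z₂ : Ordinal.{u} → M₂.W → M₁.W → Prop) : Prop where
  nonempty₁ : ∀ β ≤ α, ∃ x y, Z₁ β x y
  nonempty₂ : ∀ β ≤ α, ∃ x y, Z₂ β x y
  anti₁ : ∀ β γ, β ≤ γ → γ ≤ α → ∀ x y, Z₁ γ x y → Z₁ β x y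
  anti₂ : ∀ β γ, β ≤ γ → γ ≤ α → ∀ x y, Z₂ γ x y → Z₂ β x y
  star₁ : ∀ γ ≤ α, ∀ x y, Z₁ γ x y → Z₂ γ (M₂.star y) (M₁.star x)
  star₂ : ∀ γ ≤ α, ∀ x y, Z₂ γ x y → Z₁ γ (M₁.star y) (M₂.star x)
  back₁ : ∀ β < α, ∀ x y, Z₁ (Order.succ β) x y → ∀ b c, M₂.R y b c →
    ∃ b' c', M₁.R x b' c' ∧ Z₂ β b b' ∧ Z₁ β c' c
  back₂ : ∀ β < α, ∀ x y, Z₂ (Order.succ β) x y → ∀ b c, M₁.R y b c →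
    ∃ b' c', M₂.R x b' c' ∧ Z₁ β b b' ∧ Z₂ β c' c
  atom₁ : ∀ γ ≤ α, ∀ x y, Z₁ γ x y → ∀ p, M₁.V p x → M₂.V p y
  atom₂ : ∀ γ ≤ α, ∀ x y, Z₂ γ x y → ∀ p, M₂.V p x → M₁.V p y

/-! ### The correspondence language `L_{∞ω}^{corr}` -/

/-- Terms of the correspondence language: variables and the Routley star. -/
inductive CTerm : Type
  | var : ℕ → CTerm
  | star : CTerm → CTerm

/-- Formulas of the classical infinitary correspondence language, over the
signature with the ternary relation `R`, the unary function `*` and one unary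
predicate for each element of `P`. -/
inductive CForm (P : Type u) : Type (u + 1)
  | rel : CTerm → CTerm → CTerm → CForm P
  | prop : P → CTerm → CForm P
  | not : CForm P → CForm P
  | and : CForm P → CForm P → CForm P
  | imp : CForm P → CForm P → CForm P
  | conj : (ι : Type u) → (ι → CForm P) → CForm P
  | disj : (ι : Type u) → (ι → CForm P) → CForm P
  | all : ℕ → CForm P → CForm P
  | ex : ℕ → CForm P → CForm P

/-- Evaluation of terms in a Routley–Meyer model, read as a classical
structure. -/
def CTerm.eval {P : Type u} (M : RMModel P) (v : ℕ → M.W) : CTerm → M.W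
  | .var n => v n
  | .star t => M.star (t.eval M v)

/-- Classical (Tarskian) satisfaction for the correspondence language. -/
def CForm.Sat {P : Type u} (M : RMModel P) : (ℕ → M.W) → CForm P → Prop
  | v, .rel t₁ t₂ t₃ => M.R (t₁.eval M v) (t₂.eval M v) (t₃.eval M v)
  | v, .prop p t => M.V p (t.eval M v)
  | v, .not φ => ¬ CForm.Sat M v φ
  | v, .and φ ψ => CForm.Sat M v φ ∧ CForm.Sat M v ψ
  | v, .imp φ ψ => CForm.Sat M v φ → CForm.Sat M v ψ
  | v, .conj _ f => ∀ i, CForm.Sat M v (f i)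
  | v, .disj _ f => ∃ i, CForm.Sat M v (f i)
  | v, .all n φ => ∀ a : M.W, CForm.Sat M (Function.update v n a) φ
  | v, .ex n φ => ∃ a : M.W, CForm.Sat M (Function.update v n a) φ

/-- The predicates (corresponding to propositional variables) occurring in a
correspondence-language formula. -/
def CForm.props {P : Type u} : CForm P → Set P
  | .rel _ _ _ => ∅
  | .prop p _ => {p}
  | .not φ => φ.props
  | .and φ ψ => φ.props ∪ ψ.props
  | .imp φ ψ => φ.props ∪ ψ.props
  | .conj _ f => ⋃ i, (f i).props
  | .disj _ f => ⋃ i, (f i).props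
  | .all _ φ => φ.props
  | .ex _ φ => φ.props

/-- Auxiliary standard translation `T_x(φ)^{t/x}`: the parameter `n` is a
supply of fresh variables (all variables of `t` are `< n`). -/
def stAux {P : Type u} : ℕ → CTerm → RelForm P → CForm P
  | _, t, .bot => .and (.not (.rel t t t)) (.rel t t t)
  | _, t, .atom p => .prop p t
  | n, t, .neg φ => .not (stAux n (.star t) φ)
  | n, t, .conj ι f => .conj ι fun i => stAux n t (f i)
  | n, t, .disj ι f => .disj ι fun i => stAux n t (f i)
  | n, t, .imp φ ψ =>
      .all n (.all (n + 1)
        (.imp (.and (.rel t (.var n) (.var (n + 1))) (stAux (n + 2) (.var n) φ))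
          (stAux (n + 2) (.var (n + 1)) ψ)))

/-- The standard translation `T_x(φ)` with free variable `x = var 0`. -/
def stT {P : Type u} (φ : RelForm P) : CForm P := stAux 1 (.var 0) φ

/-- Satisfaction of a correspondence-language formula with one free variable
`x = var 0` at the element `w`. -/
def CForm.SatAt {P : Type u} (φ : CForm P) (M : RMModel P) (w : M.W) : Prop :=
  CForm.Sat M (fun _ => w) φ

/-- Expansion of a model by interpretations of extra predicates. -/
def RMModel.expand {P Q : Type u} (M : RMModel P) (I : Q → M.W → Prop) :
    RMModel (P ⊕ Q) :=
  { W := M.W, nonempty := M.nonempty, R := M.R, star := M.star,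
    V := Sum.elim M.V I }

/-- A `Σ¹₁` formula over the correspondence language: second-order existential
quantification over a family of extra predicates, in front of a formula. -/
structure Sigma11Form (P : Type u) : Type (u + 1) where
  preds : Type u
  matrix : CForm (P ⊕ preds)

/-- A `Π¹₁` formula over the correspondence language. -/
structure Pi11Form (P : Type u) : Type (u + 1) where
  preds : Type u
  matrix : CForm (P ⊕ preds)

/-- Satisfaction of a `Σ¹₁` formula (one free variable) at a point. -/
def Sigma11Form.SatAt {P : Type u} (φ : Sigma11Form P) (M : RMModel P)
    (w : M.W) : Prop :=
  ∃ I : φ.preds → M.W → Prop, CForm.Sat (M.expand I) (fun _ => w) φ.matrix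

/-- Satisfaction of a `Π¹₁` formula (one free variable) at a point. -/
def Pi11Form.SatAt {P : Type u} (φ : Pi11Form P) (M : RMModel P)
    (w : M.W) : Prop :=
  ∀ I : φ.preds → M.W → Prop, CForm.Sat (M.expand I) (fun _ => w) φ.matrix

/-- Propositional-variable predicates occurring in a `Σ¹₁` formula. -/
def Sigma11Form.props {P : Type u} (φ : Sigma11Form P) : Set P :=
  {p : P | Sum.inl p ∈ φ.matrix.props}

/-- Propositional-variable predicates occurring in a `Π¹₁` formula. -/
def Pi11Form.props {P : Type u} (φ : Pi11Form P) : Set P :=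
  {p : P | Sum.inl p ∈ φ.matrix.props}

/-- `A` implies `B` along relevant directed bisimulations for `Q` over the
class `K`. -/
def ImpliesAlong {P : Type u} (K : RMModel P → Prop) (Q : Set P)
    (A B : (M : RMModel P) → M.W → Prop) : Prop :=
  ∀ M₁ M₂ : RMModel P, K M₁ → K M₂ →
    ∀ (Z₁ : M₁.W → M₂.W → Prop) (Z₂ : M₂.W → M₁.W → Prop),
      IsRelDirectedBisim Q M₁ M₂ Z₁ Z₂ →
        (∀ a b, Z₁ a b → A M₁ a → B M₂ b) ∧ (∀ a b, Z₂ a b → A M₂ a → B M₁ b)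

/-- A Hilbert-style formal system for `L_{κ⁺ω}→`: a set of axioms, and a set of
rules each with fewer than `κ⁺` premises. -/
structure HilbertSystem (P : Type u) (κ : Cardinal.{u}) : Type (u + 1) where
  Axioms : Set (RelForm P)
  Rules : Set ((ι : Type u) × (ι → RelForm P) × RelForm P)
  rules_small : ∀ r ∈ Rules, Cardinal.mk r.1 < Order.succ κ

/-- `Γ ⊢_H φ`: there is a sequence of formulas of length `< κ⁺`, each member of
which is an axiom, a member of `Γ`, or follows from previous members by a rule,
with `φ` occurring (as its last member). -/
def HilbertSystem.Proves {P : Type u} {κ : Cardinal.{u}} (H : HilbertSystem P κ)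
    (Γ : Set (RelForm P)) (φ : RelForm P) : Prop :=
  ∃ (δ : Ordinal.{u}) (s : ∀ γ : Ordinal.{u}, γ < δ → RelForm P),
    δ.card < Order.succ κ ∧
    (∀ γ (hγ : γ < δ),
      s γ hγ ∈ H.Axioms ∨ s γ hγ ∈ Γ ∨
      ∃ r ∈ H.Rules, r.2.2 = s γ hγ ∧
        ∀ i : r.1, ∃ γ', ∃ hlt : γ' < γ, s γ' (hlt.trans hγ) = r.2.1 i) ∧
    ∃ γ, ∃ hγ : γ < δ, s γ hγ = φ

/-- The formula `⋁_{p ∈ PROP} (p ∧ ~p)` expressing inconsistency. -/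
def inconsistencyFormula (P : Type u) : RelForm P :=
  .disj P fun p =>
    .conj (ULift.{u} Bool) fun b => bif b.down then .atom p else .neg (.atom p)


/-- The formula `p ∧ ~p`. -/
def badForm {P : Type u} (p : P) : RelForm P :=
  .conj (ULift.{u} Bool) fun b => bif b.down then .atom p else .neg (.atom p)

theorem badForm_inj {P : Type u} : Function.Injective (badForm (P := P)) := by
  intro p q h
  unfold badForm at h
  injection h with h1 h2
  have := congrFun h2 ⟨true⟩
  simpa using this

theorem badForm_indexBound {P : Type u} (p : P) :
    (badForm p).indexBound Cardinal.aleph0.{u} := by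
  refine ⟨Cardinal.lt_aleph0_of_finite _, fun b => ?_⟩
  obtain ⟨b⟩ := b
  cases b <;> simp [RelForm.indexBound]

theorem sat_badForm {P : Type u} (M : RMModel P) (T : M.W) (p : P) :
    M.sat T (badForm p) ↔ (M.sat T (.atom p) ∧ M.sat T (.neg (.atom p))) := by
  constructor
  · intro h
    exact ⟨h ⟨true⟩, h ⟨false⟩⟩
  · rintro ⟨h1, h2⟩ ⟨b⟩
    cases b
    · exact h2
    · exact h1

/-- A two-world model inconsistent exactly at `q`. -/
def qModel {P : Type u} (q : P) : RMModel P where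
  W := ULift.{u} Bool
  nonempty := ⟨⟨true⟩⟩
  R a b c := a.down = true → b.down = true → c.down = true
  star a := ⟨!a.down⟩
  V p w := p = q ∧ w.down = true

/-- The frame relation of `qModel`, at the level of `Bool`. -/
def bR (a b c : Bool) : Prop := a = true → b = true → c = true

instance (a b c : Bool) : Decidable (bR a b c) := by unfold bR; infer_instance

theorem bframe1 : ∀ x : Bool, bR true x x := by decide
theorem bframe2 : ∀ x v y z : Bool, bR true x v → bR v y z → bR x y z := by decide
theorem bframe3 : ∀ x : Bool, (!(!x)) = x := by decide
theorem bframe4 : ∀ x y : Bool, bR true x y → bR true (!y) (!x) := by decide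
theorem bframe5 : ∀ z x y : Bool, bR z x y → bR z (!y) (!x) := by decide
theorem bframe6 : ∀ x y z v u : Bool, bR x y u → bR u z v →
    ∃ w : Bool, bR x w v ∧ bR y z w := by decide
theorem bframe7 : ∀ x : Bool, bR x x x := by decide
theorem bframe8 : ∀ x y z : Bool, bR x y z → bR y x z := by decide
theorem bframe9 : ∀ x y z : Bool, bR x y z → bR true x z ∨ bR true y z := by decide

theorem qModel_isRM {P : Type u} (q : P) : IsRMModel (qModel q) ⟨true⟩ := by
  refine ⟨⟨?_, ?_, ?_, ?_, ?_⟩, ?_, ?_, ?_, ?_, ?_⟩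
  · rintro ⟨x⟩; exact bframe1 x
  · rintro ⟨x⟩ ⟨v⟩ ⟨y⟩ ⟨z⟩ h1 h2; exact bframe2 x v y z h1 h2
  · rintro ⟨x⟩; exact congrArg ULift.up (bframe3 x)
  · rintro ⟨x⟩ ⟨y⟩ h; exact bframe4 x y h
  · rintro p ⟨x⟩ ⟨y⟩ ⟨hp, hx⟩ hR
    exact ⟨hp, hR rfl hx⟩
  · rintro ⟨z⟩ ⟨x⟩ ⟨y⟩ h; exact bframe5 z x y h
  · rintro ⟨x⟩ ⟨y⟩ ⟨z⟩ ⟨v⟩ ⟨⟨u⟩, h1, h2⟩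
    obtain ⟨w, hw1, hw2⟩ := bframe6 x y z v u h1 h2
    exact ⟨⟨w⟩, hw1, hw2⟩
  · rintro ⟨x⟩; exact bframe7 x
  · rintro ⟨x⟩ ⟨y⟩ ⟨z⟩ h; exact bframe8 x y z h
  · rintro ⟨x⟩ ⟨y⟩ ⟨z⟩ h; exact bframe9 x y z h

theorem qModel_incons {P : Type u} (q : P) : Inconsistent (qModel q) ⟨true⟩ := by
  refine ⟨q, ⟨rfl, rfl⟩, ?_⟩
  simp [RMModel.sat, qModel]

theorem qModel_not_bad {P : Type u} {p q : P} (h : p ≠ q) :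
    ¬ (qModel q).sat ⟨true⟩ (badForm p) := by
  rw [sat_badForm (qModel q) (⟨true⟩ : (qModel q).W) p]
  rintro ⟨⟨hp, _⟩, _⟩
  exact h hp

/-- If `PROP` is infinite, inconsistency is not a property of
pointed models axiomatizable in the finitary language `L_{ωω}→` with respect to
any class `V_S` lying between the RM-models and the B-models (assuming the
compactness of the finitary language over `V_S`). -/
theorem inconsistency_not_axiomatizable {P : Type u} [Infinite P]
    (VS : ∀ M : RMModel P, M.W → Prop)
    (hRM : ∀ (M : RMModel P) (T : M.W), IsRMModel M T → VS M T)
    (hB : ∀ (M : RMModel P) (T : M.W), VS M T → IsBModel M T)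
    (hcompact : ∀ Φ Ψ : Set (RelForm P),
      (∀ φ ∈ Φ, φ.indexBound Cardinal.aleph0.{u}) →
      (∀ ψ ∈ Ψ, ψ.indexBound Cardinal.aleph0.{u}) →
      (∀ (Φ₀ Ψ₀ : Finset (RelForm P)), ↑Φ₀ ⊆ Φ → ↑Ψ₀ ⊆ Ψ →
        ∃ (M : RMModel P) (T : M.W), VS M T ∧
          (∀ φ ∈ Φ₀, M.sat T φ) ∧ (∀ ψ ∈ Ψ₀, ¬ M.sat T ψ)) →
      ∃ (M : RMModel P) (T : M.W), VS M T ∧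
        (∀ φ ∈ Φ, M.sat T φ) ∧ (∀ ψ ∈ Ψ, ¬ M.sat T ψ)) :
    ¬ ∃ Γ : Set (RelForm P),
        (∀ φ ∈ Γ, φ.indexBound Cardinal.aleph0.{u}) ∧
        ∀ (M : RMModel P) (T : M.W), VS M T →
          ((∀ φ ∈ Γ, M.sat T φ) ↔ Inconsistent M T) := by
  rintro ⟨Γ, hΓb, hΓ⟩
  have hbd : ∀ ψ ∈ Set.range (badForm (P := P)), ψ.indexBound Cardinal.aleph0.{u} := by
    rintro ψ ⟨p, rfl⟩; exact badForm_indexBound p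
  have hfin : ∀ (Φ₀ Ψ₀ : Finset (RelForm P)), ↑Φ₀ ⊆ Γ →
      ↑Ψ₀ ⊆ Set.range (badForm (P := P)) →
      ∃ (M : RMModel P) (T : M.W), VS M T ∧
        (∀ φ ∈ Φ₀, M.sat T φ) ∧ (∀ ψ ∈ Ψ₀, ¬ M.sat T ψ) := by
    intro Φ₀ Ψ₀ hΦ₀ hΨ₀
    have hS : (badForm ⁻¹' (↑Ψ₀ : Set (RelForm P))).Finite :=
      Set.Finite.preimage badForm_inj.injOn Ψ₀.finite_toSet
    obtain ⟨q, hq⟩ := hS.infinite_compl.nonempty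
    have hvs : VS (qModel q) ⟨true⟩ := hRM _ _ (qModel_isRM q)
    refine ⟨qModel q, ⟨true⟩, hvs, ?_, ?_⟩
    · intro φ hφ
      exact (hΓ _ _ hvs).mpr (qModel_incons q) φ (hΦ₀ hφ)
    · intro ψ hψ
      obtain ⟨p, rfl⟩ := hΨ₀ hψ
      refine qModel_not_bad (fun hpq => hq ?_)
      subst hpq
      exact hψ
  obtain ⟨M, T, hVS, hΦ, hΨ⟩ := hcompact Γ (Set.range badForm) hΓb hbd hfin
  obtain ⟨p, h1, h2⟩ := (hΓ M T hVS).mp hΦ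
  exact hΨ (badForm p) ⟨p, rfl⟩ ((sat_badForm M T p).mpr ⟨h1, h2⟩)
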